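/- There is no self-adjoint dephased complex Hadamard matrix H ∈ M₆(ℂ) whose diagonal is (1, 1, 1, 1, 1, 1). -/

import Mathlib

open Complex Matrix ComplexConjugate

/-- A complex Hadamard matrix of order `n`: all entries of absolute value 1
and pairwise orthogonal rows, i.e. `H Hᴴ = n·1`. -/
def IsHadamard {n : ℕ} (H : Matrix (Fin n) (Fin n) ℂ) : Prop :=
  (∀ i j, ‖H i j‖ = 1) ∧ H * Hᴴ = (n : ℂ) • 1

/-- A matrix is dephased if its first row and first column consist of 1's. -/
def IsDephased {n : ℕ} [NeZero n] (H : Matrix (Fin n) (Fin n) ℂ) : Prop :=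
  ∀ k, H 0 k = 1 ∧ H k 0 = 1

/-- Eigenvalues of a Hermitian `H` with `H * H = 6•1` square to 6. -/
lemma aux_eig_sq (H : Matrix (Fin 6) (Fin 6) ℂ) (hH : H.IsHermitian)
    (h6 : H * H = (6:ℂ) • 1) (i : Fin 6) :
    hH.eigenvalues i * hH.eigenvalues i = 6 := by
  set v := ⇑(hH.eigenvectorBasis i) with hv
  have hv0 : v ≠ 0 := by
    intro h
    apply hH.eigenvectorBasis.orthonormal.ne_zero i
    ext j
    exact congrFun h j
  have h1 : H *ᵥ v = hH.eigenvalues i • v := hH.mulVec_eigenvectorBasis i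
  have h2 : (H * H) *ᵥ v = (hH.eigenvalues i * hH.eigenvalues i) • v := by
    rw [← mulVec_mulVec, h1, mulVec_smul, h1, smul_smul]
  rw [h6] at h2
  have h3 : ((6:ℝ)) • v = (hH.eigenvalues i * hH.eigenvalues i) • v := by
    rw [← h2]
    ext j
    simp [smul_mulVec, one_mulVec]
  have h4 := sub_eq_zero.mpr h3
  rw [← sub_smul] at h4
  rcases smul_eq_zero.mp h4 with h | h
  · linarith [sub_eq_zero.mp (show (6:ℝ) - hH.eigenvalues i * hH.eigenvalues i = 0 from h)]
  · exact absurd h hv0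

/-- The trace of a Hermitian matrix is the sum of its eigenvalues. -/
lemma aux_trace_eig (H : Matrix (Fin 6) (Fin 6) ℂ) (hH : H.IsHermitian) :
    H.trace = ∑ i, (hH.eigenvalues i : ℂ) := by
  conv_lhs => rw [hH.spectral_theorem]
  rw [Unitary.conjStarAlgAut_apply, Matrix.trace_mul_cycle, Unitary.coe_star_mul_self, Matrix.one_mul,
    Matrix.trace_diagonal]
  rfl

/-- There is no self-adjoint dephased complex Hadamard matrix in
M₆(ℂ) whose diagonal is (1, 1, 1, 1, 1, 1). -/
theorem no_selfAdjoint_dephased_diag_stmt7 :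
    ¬ ∃ H : Matrix (Fin 6) (Fin 6) ℂ,
      _root_.IsHadamard H ∧ Hᴴ = H ∧ IsDephased H ∧
      H 0 0 = 1 ∧ H 1 1 = 1 ∧ H 2 2 = 1 ∧
      H 3 3 = 1 ∧ H 4 4 = 1 ∧ H 5 5 = 1 := by
  rintro ⟨H, ⟨-, horth⟩, hsa, -, h0, h1, h2, h3, h4, h5⟩
  have hH : H.IsHermitian := hsa
  have h6 : H * H = (6:ℂ) • 1 := by
    rw [hsa] at horth
    convert horth using 2
    norm_num
  -- trace is 6
  have htr : H.trace = (6:ℂ) := by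
    rw [Matrix.trace, Fin.sum_univ_six]
    simp only [Matrix.diag_apply]
    rw [h0, h1, h2, h3, h4, h5]
    norm_num
  have hsum : ∑ i, hH.eigenvalues i = 6 := by
    have : ((∑ i, hH.eigenvalues i : ℝ) : ℂ) = 6 := by
      push_cast
      rw [← aux_trace_eig H hH, htr]
    exact_mod_cast this
  -- each eigenvalue is ±√6
  have hsq : ∀ i, hH.eigenvalues i = Real.sqrt 6 ∨ hH.eigenvalues i = -Real.sqrt 6 := by
    intro i
    apply mul_self_eq_mul_self_iff.mp
    rw [Real.mul_self_sqrt (by norm_num)]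
    exact aux_eig_sq H hH h6 i
  set ε : Fin 6 → ℤ := fun i => if hH.eigenvalues i = Real.sqrt 6 then 1 else -1 with hε
  have hεval : ∀ i, hH.eigenvalues i = (ε i : ℝ) * Real.sqrt 6 := by
    intro i
    rcases hsq i with h | h
    · simp [hε, h]
    · have hne : hH.eigenvalues i ≠ Real.sqrt 6 := by
        rw [h]
        intro hc
        have h6pos : (0:ℝ) < Real.sqrt 6 := Real.sqrt_pos.mpr (by norm_num)
        linarith
      simp only [hε, if_neg hne]
      rw [h]
      push_cast
      ring
  set t : ℤ := ∑ i, ε i with ht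
  have hts : (t : ℝ) * Real.sqrt 6 = 6 := by
    rw [ht]
    push_cast
    rw [Finset.sum_mul]
    calc ∑ i, ((ε i : ℝ)) * Real.sqrt 6 = ∑ i, hH.eigenvalues i :=
          Finset.sum_congr rfl fun i _ => (hεval i).symm
      _ = 6 := hsum
  have ht2 : (t : ℝ) ^ 2 * 6 = 36 := by
    have := congrArg (· ^ 2) hts
    simp only [mul_pow] at this
    rw [Real.sq_sqrt (by norm_num : (6:ℝ) ≥ 0)] at this
    linarith [this]
  have ht6 : t ^ 2 = 6 := by
    have : ((t ^ 2 : ℤ) : ℝ) = 6 := by push_cast; linarith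
    exact_mod_cast this
  have hb1 : -3 ≤ t := by nlinarith
  have hb2 : t ≤ 3 := by nlinarith
  clear_value t
  interval_cases t <;> omega
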